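/- Fix a > 0 and define f(ζ) = ln(∫₀^ζ exp(-t²/2) dt) + ln(∫₀^{a/ζ} exp(-t²/2) dt) for ζ > 0. Then f is strictly decreasing on the interval (√a, ∞). -/

import Mathlib

open Real Set

noncomputable def Gg (x : ℝ) : ℝ := ∫ t in (0:ℝ)..x, Real.exp (-t^2/2)

lemma cont_integrand : Continuous fun t : ℝ => Real.exp (-t^2/2) := by
  continuity

lemma Gg_hasDerivAt (x : ℝ) : HasDerivAt Gg (Real.exp (-x^2/2)) x :=
  intervalIntegral.integral_hasDerivAt_right
    (cont_integrand.intervalIntegrable _ _)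
    (cont_integrand.stronglyMeasurableAtFilter _ _)
    cont_integrand.continuousAt

lemma Gg_pos {x : ℝ} (hx : 0 < x) : 0 < Gg x := by
  have hi : IntervalIntegrable (fun t : ℝ => Real.exp (-t^2/2)) MeasureTheory.volume 0 x :=
    cont_integrand.intervalIntegrable _ _
  exact intervalIntegral.intervalIntegral_pos_of_pos_on hi (fun t _ => Real.exp_pos _) hx

lemma Gg_le {x : ℝ} (hx : 0 ≤ x) : Gg x ≤ x := by
  have hi : IntervalIntegrable (fun t : ℝ => Real.exp (-t^2/2)) MeasureTheory.volume 0 x :=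
    cont_integrand.intervalIntegrable _ _
  have := intervalIntegral.integral_mono_on hx hi
    (intervalIntegrable_const (c := (1:ℝ))) (fun t _ => by
      have h : -t^2/2 ≤ 0 := by nlinarith [sq_nonneg t]
      simpa using Real.exp_le_one_iff.mpr h)
  simpa [Gg] using this

lemma key_ineq {x : ℝ} (hx : 0 < x) : (1 - x^2) * Gg x < x * Real.exp (-x^2/2) := by
  rcases le_or_gt 1 x with h | h
  · have h1 : 1 - x^2 ≤ 0 := by nlinarith
    have h2 : 0 < x * Real.exp (-x^2/2) := by positivity
    nlinarith [Gg_pos hx]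
  · have hG := Gg_le hx.le
    have he : 1 - x^2 < Real.exp (-x^2/2) := by
      have := Real.add_one_lt_exp (x := -x^2/2) (by nlinarith)
      nlinarith [sq_nonneg x]
    have h1 : 0 < 1 - x^2 := by nlinarith
    have hE : 0 < Real.exp (-x^2/2) := Real.exp_pos _
    nlinarith [Gg_pos hx]

lemma exp_hasDerivAt (x : ℝ) :
    HasDerivAt (fun x : ℝ => Real.exp (-x^2/2)) (Real.exp (-x^2/2) * (-x)) x := by
  have h1 : HasDerivAt (fun x : ℝ => -x^2/2) (-x) x := by
    have h0 : HasDerivAt (fun x : ℝ => -(x^2/2)) _ x := ((hasDerivAt_pow 2 x).div_const 2).neg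
    have he : (fun x : ℝ => -(x^2/2)) = fun x : ℝ => -x^2/2 := by funext y; ring
    rw [he] at h0
    convert h0 using 1
    norm_num
  exact h1.exp

lemma hh_hasDerivAt {x : ℝ} (hx : 0 < x) :
    HasDerivAt (fun x => x * Real.exp (-x^2/2) / Gg x)
      (((1 - x^2) * Real.exp (-x^2/2) * Gg x -
        x * Real.exp (-x^2/2) * Real.exp (-x^2/2)) / (Gg x)^2) x := by
  have hN : HasDerivAt (fun x : ℝ => x * Real.exp (-x^2/2))
      ((1 - x^2) * Real.exp (-x^2/2)) x := by
    have : HasDerivAt (fun y : ℝ => id y * Real.exp (-y^2/2)) _ x := (hasDerivAt_id x).mul (exp_hasDerivAt x)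
    convert this using 1
    simp only [id_eq]
    unfold id
    ring
  exact hN.div (Gg_hasDerivAt x) (Gg_pos hx).ne'

lemma hh_anti : StrictAntiOn (fun x => x * Real.exp (-x^2/2) / Gg x) (Ioi (0:ℝ)) := by
  apply strictAntiOn_of_deriv_neg (convex_Ioi 0)
    (fun x hx => (hh_hasDerivAt hx).continuousAt.continuousWithinAt)
  rw [interior_Ioi]
  intro x hx
  rw [(hh_hasDerivAt hx).deriv]
  apply div_neg_of_neg_of_pos _ (pow_pos (Gg_pos hx) 2)
  have := key_ineq hx
  nlinarith [Real.exp_pos (-x^2/2)]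

theorem stmt3 (a : ℝ) (ha : 0 < a) :
    StrictAntiOn
      (fun ζ : ℝ =>
        Real.log (∫ t in (0:ℝ)..ζ, Real.exp (-t^2/2)) +
        Real.log (∫ t in (0:ℝ)..(a/ζ), Real.exp (-t^2/2)))
      (Set.Ioi (Real.sqrt a)) := by
  have hsa : 0 < Real.sqrt a := Real.sqrt_pos.mpr ha
  have hderiv : ∀ ζ ∈ Ioi (Real.sqrt a),
      HasDerivAt (fun ζ : ℝ =>
        Real.log (∫ t in (0:ℝ)..ζ, Real.exp (-t^2/2)) +
        Real.log (∫ t in (0:ℝ)..(a/ζ), Real.exp (-t^2/2)))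
        (Real.exp (-ζ^2/2) / Gg ζ +
          (Real.exp (-(a/ζ)^2/2) * ((0 * ζ - a * 1)/ζ^2)) / Gg (a/ζ)) ζ := by
    intro ζ hζ
    have hζ0 : 0 < ζ := lt_trans hsa hζ
    have hu : 0 < a / ζ := div_pos ha hζ0
    have h1 : HasDerivAt (fun ζ => Real.log (Gg ζ)) (Real.exp (-ζ^2/2) / Gg ζ) ζ :=
      (Gg_hasDerivAt ζ).log (Gg_pos hζ0).ne'
    have hdiv : HasDerivAt (fun ζ : ℝ => a / ζ) ((0 * ζ - a * 1)/ζ^2) ζ :=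
      (hasDerivAt_const ζ a).div (hasDerivAt_id ζ) hζ0.ne'
    have h2 : HasDerivAt (fun ζ : ℝ => Real.log (Gg (a/ζ)))
        ((Real.exp (-(a/ζ)^2/2) * ((0 * ζ - a * 1)/ζ^2)) / Gg (a/ζ)) ζ := by
      exact ((Gg_hasDerivAt (a/ζ)).comp ζ hdiv).log (Gg_pos hu).ne'
    exact h1.add h2
  apply strictAntiOn_of_deriv_neg (convex_Ioi _)
    (fun ζ hζ => ((hderiv ζ hζ).continuousAt).continuousWithinAt)
  rw [interior_Ioi]
  intro ζ hζ
  rw [(hderiv ζ hζ).deriv]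
  have hζ0 : 0 < ζ := lt_trans hsa hζ
  have hu : 0 < a / ζ := div_pos ha hζ0
  have hζ' : Real.sqrt a < ζ := mem_Ioi.mp hζ
  have haζ : a < ζ^2 := by
    nlinarith [Real.mul_self_sqrt ha.le, hζ', hsa]
  have huζ : a / ζ < ζ := by
    rw [div_lt_iff₀ hζ0]; nlinarith
  have hmono := hh_anti (mem_Ioi.mpr hu) (mem_Ioi.mpr hζ0) huζ
  set u := a / ζ with hu_def
  have hA := Gg_pos hζ0
  have hB := Gg_pos hu
  have hP := Real.exp_pos (-ζ^2/2)
  have hQ := Real.exp_pos (-u^2/2)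
  have hmono' : ζ * Real.exp (-ζ^2/2) * Gg u < u * Real.exp (-u^2/2) * Gg ζ := by
    have := (div_lt_div_iff₀ hA hB).mp hmono
    linarith
  have hau : a = u * ζ := by rw [hu_def]; field_simp
  have hz2 : (0:ℝ) < ζ^2 := by positivity
  have hkey : Real.exp (-ζ^2/2) * Gg u * ζ^2 < a * Real.exp (-u^2/2) * Gg ζ := by
    rw [hau]
    nlinarith [mul_lt_mul_of_pos_left hmono' hζ0]
  have hrw : Real.exp (-ζ^2/2)/Gg ζ + Real.exp (-u^2/2) * ((0*ζ - a*1)/ζ^2)/Gg u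
      = (Real.exp (-ζ^2/2) * Gg u * ζ^2 - a * Real.exp (-u^2/2) * Gg ζ)/(ζ^2 * Gg ζ * Gg u) := by
    field_simp
    ring
  rw [hrw]
  exact div_neg_of_neg_of_pos (by linarith) (mul_pos (mul_pos hz2 hA) hB)
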